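/- An NBUE life distribution is uniquely determined by its moment sequence: if F and G are both NBUE with the same moments E[X^k] for all positive integers k, then F = G. -/

import Mathlib

open MeasureTheory Set Filter
open scoped ENNReal NNReal

lemma aux_meas_G (P : Measure ℝ) : Measurable (fun t => P (Ioi t)) :=
  Antitone.measurable (fun _ _ hab => measure_mono (Ioi_subset_Ioi hab))

lemma aux_ae_nonneg (P : Measure ℝ) (hP0 : P (Iio 0) = 0) : ∀ᵐ x ∂P, 0 ≤ x := by
  rw [ae_iff]
  convert hP0 using 2
  ext x; simp [Iio]

-- layer cake for powers
lemma aux_layercake (P : Measure ℝ) [IsProbabilityMeasure P] (hP0 : P (Iio 0) = 0) (k : ℕ) :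
    ∫⁻ x, ENNReal.ofReal (x ^ (k+1)) ∂P
      = ∫⁻ t in Ioi 0, P (Ioi t) * ENNReal.ofReal (((k:ℝ)+1) * t ^ k) := by
  have h := lintegral_comp_eq_lintegral_meas_lt_mul P (f := fun x => x)
      (g := fun t => ((k:ℝ)+1) * t ^ k) (aux_ae_nonneg P hP0) aemeasurable_id
      (fun t _ => (intervalIntegral.intervalIntegrable_pow k).const_mul _)
      (ae_restrict_of_forall_mem measurableSet_Ioi (fun t ht => by have h0 := mem_Ioi.mp ht; positivity))
  calc ∫⁻ x, ENNReal.ofReal (x ^ (k+1)) ∂P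
      = ∫⁻ ω, ENNReal.ofReal (∫ t in (0:ℝ)..(fun x => x) ω, ((k:ℝ)+1) * t ^ k) ∂P := by
        apply lintegral_congr; intro x
        congr 1
        rw [intervalIntegral.integral_const_mul, integral_pow]
        field_simp
        simp
    _ = ∫⁻ t in Ioi 0, P {a : ℝ | t < (fun x => x) a} * ENNReal.ofReal (((k:ℝ)+1) * t ^ k) := h
    _ = ∫⁻ t in Ioi 0, P (Ioi t) * ENNReal.ofReal (((k:ℝ)+1) * t ^ k) := rfl

lemma aux_layercake0 (P : Measure ℝ) [IsProbabilityMeasure P] (hP0 : P (Iio 0) = 0)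
    (hPint : Integrable id P) (μ : ℝ) (hμ : μ = ∫ x, x ∂P) :
    ∫⁻ t in Ioi 0, P (Ioi t) = ENNReal.ofReal μ := by
  have h := lintegral_eq_lintegral_meas_lt P (f := fun x => x) (aux_ae_nonneg P hP0)
      aemeasurable_id
  have h2 : ENNReal.ofReal μ = ∫⁻ x, ENNReal.ofReal x ∂P := by
    rw [hμ]
    exact ofReal_integral_eq_lintegral_ofReal hPint (aux_ae_nonneg P hP0)
  rw [h2, h]; rfl

-- NBUE in lintegral form
lemma aux_nbue_lintegral (P : Measure ℝ) [IsProbabilityMeasure P] (hP0 : P (Iio 0) = 0)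
    (hPint : Integrable id P) (μ : ℝ) (hμ : μ = ∫ x, x ∂P)
    (hμnn : 0 ≤ μ)
    (hNBUE : ∀ t ≥ (0:ℝ), ∫ x in Ioi t, (P (Ioi x)).toReal ≤ μ * (P (Ioi t)).toReal)
    (t : ℝ) (ht : 0 ≤ t) :
    ∫⁻ x in Ioi t, P (Ioi x) ≤ ENNReal.ofReal μ * P (Ioi t) := by
  have hfin : ∫⁻ x in Ioi t, P (Ioi x) < ∞ := by
    calc ∫⁻ x in Ioi t, P (Ioi x) ≤ ∫⁻ x in Ioi 0, P (Ioi x) :=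
          lintegral_mono_set (Ioi_subset_Ioi ht)
      _ = ENNReal.ofReal μ := aux_layercake0 P hP0 hPint μ hμ
      _ < ∞ := ENNReal.ofReal_lt_top
  have htoReal : ∫ x in Ioi t, (P (Ioi x)).toReal
      = (∫⁻ x in Ioi t, P (Ioi x)).toReal := by
    apply integral_toReal ((aux_meas_G P).aemeasurable)
    exact Eventually.of_forall (fun x => measure_lt_top P _)
  have hb := hNBUE t ht
  rw [htoReal] at hb
  have : ∫⁻ x in Ioi t, P (Ioi x)
      = ENNReal.ofReal ((∫⁻ x in Ioi t, P (Ioi x)).toReal) :=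
    (ENNReal.ofReal_toReal hfin.ne).symm
  rw [this]
  calc ENNReal.ofReal ((∫⁻ x in Ioi t, P (Ioi x)).toReal)
      ≤ ENNReal.ofReal (μ * (P (Ioi t)).toReal) := ENNReal.ofReal_le_ofReal hb
    _ = ENNReal.ofReal μ * ENNReal.ofReal ((P (Ioi t)).toReal) := by
        rw [ENNReal.ofReal_mul hμnn]
    _ = ENNReal.ofReal μ * P (Ioi t) := by
        rw [ENNReal.ofReal_toReal (measure_ne_top P _)]

lemma aux_fubini (P : Measure ℝ) [IsProbabilityMeasure P] (k : ℕ) :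
    ∫⁻ t in Ioi 0, ENNReal.ofReal (((k:ℝ)+1) * t ^ k) * (∫⁻ x in Ioi t, P (Ioi x))
      = ∫⁻ x in Ioi 0, ENNReal.ofReal (x ^ (k+1)) * P (Ioi x) := by
  set S : Set (ℝ × ℝ) := {p | 0 < p.1 ∧ p.1 < p.2} with hS
  set F : ℝ × ℝ → ℝ≥0∞ := fun p => ENNReal.ofReal (((k:ℝ)+1) * p.1 ^ k) * P (Ioi p.2) with hF
  have hSm : MeasurableSet S :=
    (measurableSet_lt measurable_const measurable_fst).inter
      (measurableSet_lt measurable_fst measurable_snd)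
  have hFm : Measurable F := by
    apply Measurable.mul
    · exact ENNReal.measurable_ofReal.comp
        ((((continuous_pow k).measurable).const_mul _).comp measurable_fst)
    · exact (aux_meas_G P).comp measurable_snd
  have hΦm : Measurable (S.indicator F) := hFm.indicator hSm
  have swap : ∫⁻ t, ∫⁻ x, S.indicator F (t, x) ∂volume ∂volume
      = ∫⁻ x, ∫⁻ t, S.indicator F (t, x) ∂volume ∂volume := by
    apply lintegral_lintegral_swap
    exact hΦm.aemeasurable
  have hL : ∀ t : ℝ, (∫⁻ x, S.indicator F (t, x) ∂volume)
      = (Ioi (0:ℝ)).indicator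
        (fun t => ENNReal.ofReal (((k:ℝ)+1) * t ^ k) * ∫⁻ x in Ioi t, P (Ioi x)) t := by
    intro t
    by_cases ht : 0 < t
    · rw [indicator_of_mem (mem_Ioi.mpr ht)]
      have hpt : ∀ x : ℝ, S.indicator F (t, x)
          = (Ioi t).indicator (fun x => ENNReal.ofReal (((k:ℝ)+1) * t ^ k) * P (Ioi x)) x := by
        intro x
        by_cases hx : t < x
        · rw [indicator_of_mem (show (t,x) ∈ S from ⟨ht, hx⟩), indicator_of_mem (mem_Ioi.mpr hx)]
        · rw [indicator_of_notMem (fun h => hx h.2), indicator_of_notMem (by simpa using hx)]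
      simp_rw [hpt]
      rw [lintegral_indicator measurableSet_Ioi _]
      exact lintegral_const_mul _ (aux_meas_G P)
    · rw [indicator_of_notMem (by simpa using ht)]
      have hpt : ∀ x : ℝ, S.indicator F (t, x) = 0 :=
        fun x => indicator_of_notMem (fun h => ht h.1) _
      simp_rw [hpt]
      exact lintegral_zero
  have hR : ∀ x : ℝ, (∫⁻ t, S.indicator F (t, x) ∂volume)
      = (Ioi (0:ℝ)).indicator (fun x => ENNReal.ofReal (x ^ (k+1)) * P (Ioi x)) x := by
    intro x
    by_cases hx : 0 < x
    · rw [indicator_of_mem (mem_Ioi.mpr hx)]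
      have hpt : ∀ t : ℝ, S.indicator F (t, x)
          = (Ioo 0 x).indicator (fun t => ENNReal.ofReal (((k:ℝ)+1) * t ^ k)) t * P (Ioi x) := by
        intro t
        by_cases htx : t ∈ Ioo 0 x
        · rw [indicator_of_mem htx, indicator_of_mem (show (t,x) ∈ S from ⟨htx.1, htx.2⟩)]
        · rw [indicator_of_notMem (fun h => htx ⟨h.1, h.2⟩),
            indicator_of_notMem htx, zero_mul]
      simp_rw [hpt]
      rw [lintegral_mul_const' _ _ (measure_ne_top P _), lintegral_indicator measurableSet_Ioo _]
      have hint : IntegrableOn (fun t => ((k:ℝ)+1) * t ^ k) (Ioo 0 x) volume :=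
        (((intervalIntegral.intervalIntegrable_pow k).const_mul (((k:ℝ)+1))).1).mono_set
          Ioo_subset_Ioc_self
      have hnn : 0 ≤ᵐ[volume.restrict (Ioo 0 x)] (fun t => ((k:ℝ)+1) * t ^ k) :=
        ae_restrict_of_forall_mem measurableSet_Ioo
          (fun t ht => by have := ht.1; positivity)
      have h2 : ∫⁻ t in Ioo 0 x, ENNReal.ofReal (((k:ℝ)+1) * t ^ k) = ENNReal.ofReal (x ^ (k+1)) := by
        rw [← ofReal_integral_eq_lintegral_ofReal hint hnn]
        congr 1
        rw [← integral_Ioc_eq_integral_Ioo, ← intervalIntegral.integral_of_le hx.le,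
          intervalIntegral.integral_const_mul, integral_pow]
        field_simp
        simp
      rw [h2, mul_comm]
    · rw [indicator_of_notMem (by simpa using hx)]
      have hpt : ∀ t : ℝ, S.indicator F (t, x) = 0 :=
        fun t => indicator_of_notMem (fun h => hx (lt_trans h.1 h.2)) _
      simp_rw [hpt]
      exact lintegral_zero
  calc ∫⁻ t in Ioi 0, ENNReal.ofReal (((k:ℝ)+1) * t ^ k) * (∫⁻ x in Ioi t, P (Ioi x))
      = ∫⁻ t, ∫⁻ x, S.indicator F (t, x) ∂volume ∂volume := by
        rw [← lintegral_indicator measurableSet_Ioi _]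
        exact lintegral_congr (fun t => (hL t).symm)
    _ = ∫⁻ x, ∫⁻ t, S.indicator F (t, x) ∂volume ∂volume := swap
    _ = ∫⁻ x in Ioi 0, ENNReal.ofReal (x ^ (k+1)) * P (Ioi x) := by
        rw [← lintegral_indicator measurableSet_Ioi _]
        exact lintegral_congr hR

lemma aux_ofReal_succ (k : ℕ) : ENNReal.ofReal ((k:ℝ)+1) = ((k:ℝ≥0∞)+1) := by
  rw [show (k:ℝ)+1 = ((k+1 : ℕ) : ℝ) by push_cast; ring, ENNReal.ofReal_natCast]
  push_cast; ring

lemma aux_J_succ (P : Measure ℝ) [IsProbabilityMeasure P] (hP0 : P (Iio 0) = 0) (k : ℕ) :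
    ∫⁻ x, ENNReal.ofReal (x ^ (k+1)) ∂P
      = ((k:ℝ≥0∞)+1) * ∫⁻ x in Ioi 0, ENNReal.ofReal (x ^ k) * P (Ioi x) := by
  have hmeas : Measurable fun x : ℝ => ENNReal.ofReal (x ^ k) * P (Ioi x) :=
    ((continuous_pow k).measurable.ennreal_ofReal).mul (aux_meas_G P)
  rw [aux_layercake P hP0 k, ← lintegral_const_mul _ hmeas]
  apply lintegral_congr_ae
  apply ae_restrict_of_forall_mem measurableSet_Ioi
  intro t ht
  have ht0 : (0:ℝ) ≤ t := (mem_Ioi.mp ht).le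
  show P (Ioi t) * ENNReal.ofReal (((k:ℝ)+1) * t ^ k) = ((k:ℝ≥0∞)+1) * (ENNReal.ofReal (t ^ k) * P (Ioi t))
  rw [ENNReal.ofReal_mul (by positivity), aux_ofReal_succ]
  ring

lemma aux_moment_bound (P : Measure ℝ) [IsProbabilityMeasure P] (hP0 : P (Iio 0) = 0)
    (hPint : Integrable id P) (μ : ℝ) (hμ : μ = ∫ x, x ∂P) (hμnn : 0 ≤ μ)
    (hNBUE : ∀ t ≥ (0:ℝ), ∫ x in Ioi t, (P (Ioi x)).toReal ≤ μ * (P (Ioi t)).toReal) :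
    ∀ k : ℕ, ∫⁻ x, ENNReal.ofReal (x ^ k) ∂P
      ≤ (Nat.factorial k : ℝ≥0∞) * (ENNReal.ofReal μ) ^ k := by
  set J : ℕ → ℝ≥0∞ := fun k => ∫⁻ x, ENNReal.ofReal (x ^ k) ∂P with hJdef
  have hJ0 : J 0 = 1 := by
    simp [hJdef]
  have hJ1 : J 1 = ENNReal.ofReal μ := by
    have h2 : ENNReal.ofReal μ = ∫⁻ x, ENNReal.ofReal x ∂P := by
      rw [hμ]
      exact ofReal_integral_eq_lintegral_ofReal hPint (aux_ae_nonneg P hP0)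
    simp only [hJdef, pow_one]
    exact h2.symm
  have hrec : ∀ k : ℕ, J (k+1) ≤ ((k:ℝ≥0∞)+1) * ENNReal.ofReal μ * J k := by
    intro k
    rcases Nat.eq_zero_or_pos k with hk | hk
    · subst hk
      rw [hJ1, hJ0]
      simp
    · obtain ⟨m, rfl⟩ := Nat.exists_eq_succ_of_ne_zero hk.ne'
      -- J (m+2) = (m+2) * Iw (m+1), Iw (m+1) ≤ ofReal μ * J (m+1)
      have h1 : J (m+1+1) = (((m+1:ℕ):ℝ≥0∞)+1) *
          ∫⁻ x in Ioi 0, ENNReal.ofReal (x ^ (m+1)) * P (Ioi x) := by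
        exact_mod_cast aux_J_succ P hP0 (m+1)
      have h2 : (∫⁻ x in Ioi 0, ENNReal.ofReal (x ^ (m+1)) * P (Ioi x))
          ≤ ENNReal.ofReal μ * J (m+1) := by
        rw [← aux_fubini P m]
        calc ∫⁻ t in Ioi 0, ENNReal.ofReal (((m:ℝ)+1) * t ^ m) * (∫⁻ x in Ioi t, P (Ioi x))
            ≤ ∫⁻ t in Ioi 0, ENNReal.ofReal (((m:ℝ)+1) * t ^ m)
                * (ENNReal.ofReal μ * P (Ioi t)) := by
              apply lintegral_mono_ae
              apply ae_restrict_of_forall_mem measurableSet_Ioi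
              intro t ht
              exact mul_le_mul_right
                (aux_nbue_lintegral P hP0 hPint μ hμ hμnn hNBUE t (mem_Ioi.mp ht).le) _
          _ = ENNReal.ofReal μ * ∫⁻ t in Ioi 0, P (Ioi t) * ENNReal.ofReal (((m:ℝ)+1) * t ^ m) := by
              have hmeas : Measurable fun t : ℝ => P (Ioi t) * ENNReal.ofReal (((m:ℝ)+1) * t ^ m) :=
                (aux_meas_G P).mul
                  ((((continuous_pow m).measurable).const_mul _).ennreal_ofReal)
              rw [← lintegral_const_mul _ hmeas]
              apply lintegral_congr
              intro t
              ring
          _ = ENNReal.ofReal μ * J (m+1) := by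
              rw [← aux_layercake P hP0 m]
      calc J (m+1+1) ≤ (((m+1:ℕ):ℝ≥0∞)+1) * (ENNReal.ofReal μ * J (m+1)) := by
            rw [h1]; exact mul_le_mul_right h2 _
        _ = (((m+1:ℕ):ℝ≥0∞)+1) * ENNReal.ofReal μ * J (m+1) := by ring
  intro k
  induction k with
  | zero => simp [hJ0]
  | succ n ih =>
      calc J (n+1) ≤ ((n:ℝ≥0∞)+1) * ENNReal.ofReal μ * J n := hrec n
        _ ≤ ((n:ℝ≥0∞)+1) * ENNReal.ofReal μ
            * ((Nat.factorial n : ℝ≥0∞) * (ENNReal.ofReal μ) ^ n) := by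
            exact mul_le_mul_right ih _
        _ = (Nat.factorial (n+1) : ℝ≥0∞) * (ENNReal.ofReal μ) ^ (n+1) := by
            rw [Nat.factorial_succ]
            push_cast
            ring

lemma aux_choose_le (n j : ℕ) (h : j ≤ n) : n.choose j ≤ 2 ^ n := by
  calc n.choose j ≤ ∑ m ∈ Finset.range (n+1), n.choose m :=
        Finset.single_le_sum (fun _ _ => Nat.zero_le _) (Finset.mem_range.mpr (Nat.lt_succ_of_le h))
    _ = 2 ^ n := Nat.sum_range_choose n

lemma aux_expand (P : Measure ℝ) [IsProbabilityMeasure P] (hP0 : P (Iio 0) = 0)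
    (μ0 : ℝ) (hμ0 : 0 < μ0)
    (hPb : ∀ k : ℕ, ∫⁻ x, ENNReal.ofReal (x ^ k) ∂P
      ≤ (Nat.factorial k : ℝ≥0∞) * (ENNReal.ofReal μ0) ^ k)
    (s0 Δ : ℝ) (hs0 : 0 ≤ s0) (hΔ0 : 0 ≤ Δ) (hΔ : Δ ≤ 1/(4*μ0)) (k : ℕ) :
    ∫ x, x ^ k * Real.exp (-((s0+Δ) * x)) ∂P
      = ∑' j : ℕ, ((-Δ)^j / (Nat.factorial j : ℝ)) * ∫ x, x ^ (k+j) * Real.exp (-(s0 * x)) ∂P := by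
  set f : ℕ → ℝ → ℝ :=
    fun j x => ((-Δ)^j / (Nat.factorial j : ℝ)) * (x^(k+j) * Real.exp (-(s0*x))) with hf
  have hpt : ∀ x : ℝ, x ^ k * Real.exp (-((s0+Δ)*x)) = ∑' j, f j x := by
    intro x
    have e2 : Real.exp (-(Δ*x)) = ∑' j : ℕ, (-(Δ*x))^j / (Nat.factorial j : ℝ) := by
      rw [Real.exp_eq_exp_ℝ, NormedSpace.exp_eq_tsum_div]
    calc x ^ k * Real.exp (-((s0+Δ)*x))
        = (∑' j : ℕ, (-(Δ*x))^j / (Nat.factorial j : ℝ)) * (x^k * Real.exp (-(s0*x))) := by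
          rw [← e2, show -((s0+Δ)*x) = -(s0*x) + -(Δ*x) by ring, Real.exp_add]
          ring
      _ = ∑' j : ℕ, ((-(Δ*x))^j / (Nat.factorial j : ℝ)) * (x^k * Real.exp (-(s0*x))) :=
          tsum_mul_right.symm
      _ = ∑' j, f j x := by
          apply tsum_congr
          intro j
          have hx : (-(Δ*x))^j = (-Δ)^j * x^j := by
            rw [show -(Δ*x) = (-Δ)*x by ring, mul_pow]
          rw [hf]
          simp only
          rw [hx, pow_add]
          ring
  have hmeas : ∀ j, AEStronglyMeasurable (f j) P := by
    intro j
    exact (Continuous.aestronglyMeasurable (by fun_prop))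
  have hsum : (∑' j, ∫⁻ x, ‖f j x‖₊ ∂P) ≠ ∞ := by
    set u : ℕ → ℝ := fun j => Δ^j / (Nat.factorial j : ℝ) * ((Nat.factorial (k+j) : ℝ) * μ0^(k+j))
      with hu
    have hunn : ∀ j, 0 ≤ u j := by
      intro j
      have h1 : (0:ℝ) ≤ (Nat.factorial j : ℝ) := Nat.cast_nonneg _
      have h2 : (0:ℝ) ≤ (Nat.factorial (k+j) : ℝ) := Nat.cast_nonneg _
      positivity
    have hb : ∀ j, ∫⁻ x, ‖f j x‖₊ ∂P ≤ ENNReal.ofReal (u j) := by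
      intro j
      have hjfact : (0:ℝ) < (Nat.factorial j : ℝ) := by exact_mod_cast (Nat.factorial_pos j)
      have hc : (0:ℝ) ≤ Δ^j / (Nat.factorial j : ℝ) := by positivity
      calc ∫⁻ x, ‖f j x‖₊ ∂P
          ≤ ∫⁻ x, ENNReal.ofReal (Δ^j / (Nat.factorial j : ℝ)) * ENNReal.ofReal (x^(k+j)) ∂P := by
            apply lintegral_mono_ae
            filter_upwards [aux_ae_nonneg P hP0] with x hx
            have hcoe : (‖f j x‖₊ : ℝ≥0∞) = ENNReal.ofReal |f j x| := by
              rw [← Real.norm_eq_abs]; exact (ofReal_norm _).symm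
            rw [hcoe, ← ENNReal.ofReal_mul hc]
            apply ENNReal.ofReal_le_ofReal
            have h1 : |f j x| = (Δ^j / (Nat.factorial j : ℝ)) * (x^(k+j) * Real.exp (-(s0*x))) := by
              rw [hf]
              simp only
              rw [abs_mul, abs_div, abs_pow, abs_neg, abs_of_nonneg hΔ0,
                abs_of_nonneg (Nat.cast_nonneg _ : (0:ℝ) ≤ (Nat.factorial j : ℝ)),
                abs_mul, abs_pow, abs_of_nonneg hx, abs_of_nonneg (Real.exp_pos _).le]
            rw [h1]
            have he : Real.exp (-(s0*x)) ≤ 1 :=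
              Real.exp_le_one_iff.mpr (neg_nonpos.mpr (by positivity))
            have hxp : (0:ℝ) ≤ x^(k+j) := by positivity
            calc (Δ^j / (Nat.factorial j : ℝ)) * (x^(k+j) * Real.exp (-(s0*x)))
                ≤ (Δ^j / (Nat.factorial j : ℝ)) * (x^(k+j) * 1) :=
                  mul_le_mul_of_nonneg_left (mul_le_mul_of_nonneg_left he hxp) hc
              _ = (Δ^j / (Nat.factorial j : ℝ)) * x^(k+j) := by ring
        _ = ENNReal.ofReal (Δ^j / (Nat.factorial j : ℝ)) * ∫⁻ x, ENNReal.ofReal (x^(k+j)) ∂P :=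
            lintegral_const_mul _ ((continuous_pow (k+j)).measurable.ennreal_ofReal)
        _ ≤ ENNReal.ofReal (Δ^j / (Nat.factorial j : ℝ))
            * ((Nat.factorial (k+j) : ℝ≥0∞) * (ENNReal.ofReal μ0) ^ (k+j)) :=
            mul_le_mul_right (hPb (k+j)) _
        _ = ENNReal.ofReal (u j) := by
            rw [← ENNReal.ofReal_pow hμ0.le, ← ENNReal.ofReal_natCast (Nat.factorial (k+j)),
              ← ENNReal.ofReal_mul (Nat.cast_nonneg _), ← ENNReal.ofReal_mul hc]
    have husum : Summable u := by
      refine Summable.of_nonneg_of_le hunn (fun j => ?_)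
        (((summable_geometric_of_lt_one (by norm_num : (0:ℝ) ≤ 1/2) (by norm_num)).mul_left
          ((Nat.factorial k : ℝ) * μ0^k * 2^k)))
      have hfact : ((Nat.factorial (k+j) : ℝ)) ≤ 2^(k+j) * ((Nat.factorial j : ℝ) * (Nat.factorial k : ℝ)) := by
        have h1 : (k+j).choose j * Nat.factorial j * Nat.factorial k = Nat.factorial (k+j) := by
          have := Nat.choose_mul_factorial_mul_factorial (Nat.le_add_left j k)
          simpa [Nat.add_sub_cancel] using this
        have h2 : (k+j).choose j ≤ 2^(k+j) := aux_choose_le (k+j) j (Nat.le_add_left j k)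
        calc ((Nat.factorial (k+j) : ℝ)) = ((k+j).choose j : ℝ) * (Nat.factorial j : ℝ) * (Nat.factorial k : ℝ) := by
              exact_mod_cast congrArg (Nat.cast (R := ℝ)) h1.symm
          _ ≤ (2:ℝ)^(k+j) * (Nat.factorial j : ℝ) * (Nat.factorial k : ℝ) := by
              have : ((k+j).choose j : ℝ) ≤ (2:ℝ)^(k+j) := by exact_mod_cast h2
              gcongr
          _ = 2^(k+j) * ((Nat.factorial j : ℝ) * (Nat.factorial k : ℝ)) := by ring
      have hjfact : (0:ℝ) < (Nat.factorial j : ℝ) := by exact_mod_cast (Nat.factorial_pos j)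
      have hstep : u j ≤ Δ^j / (Nat.factorial j : ℝ)
          * ((2^(k+j) * ((Nat.factorial j : ℝ) * (Nat.factorial k : ℝ))) * μ0^(k+j)) := by
        rw [hu]
        simp only
        apply mul_le_mul_of_nonneg_left
          (mul_le_mul_of_nonneg_right hfact (by positivity)) (by positivity)
      have heq : Δ^j / (Nat.factorial j : ℝ)
          * ((2^(k+j) * ((Nat.factorial j : ℝ) * (Nat.factorial k : ℝ))) * μ0^(k+j))
          = ((Nat.factorial k : ℝ) * μ0^k * 2^k) * ((2*Δ*μ0)^j) := by
        field_simp
        ring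
      have hhalf : (2*Δ*μ0)^j ≤ (1/2:ℝ)^j := by
        apply pow_le_pow_left₀ (by positivity)
        have h4 : (1/(4*μ0)) * μ0 = 1/4 := by field_simp
        nlinarith [mul_le_mul_of_nonneg_right hΔ hμ0.le]
      calc u j ≤ ((Nat.factorial k : ℝ) * μ0^k * 2^k) * ((2*Δ*μ0)^j) := by
            rw [← heq]; exact hstep
        _ ≤ ((Nat.factorial k : ℝ) * μ0^k * 2^k) * (1/2)^j := by
            apply mul_le_mul_of_nonneg_left hhalf (by positivity)
    have hlt : (∑' j, ∫⁻ x, ‖f j x‖₊ ∂P) < ∞ := calc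
      ∑' j, ∫⁻ x, ‖f j x‖₊ ∂P ≤ ∑' j, ENNReal.ofReal (u j) := ENNReal.tsum_le_tsum hb
      _ = ENNReal.ofReal (∑' j, u j) := (ENNReal.ofReal_tsum_of_nonneg hunn husum).symm
      _ < ∞ := ENNReal.ofReal_lt_top
    exact hlt.ne
  calc ∫ x, x ^ k * Real.exp (-((s0+Δ) * x)) ∂P = ∫ x, ∑' j, f j x ∂P := by
        apply integral_congr_ae
        exact Eventually.of_forall hpt
    _ = ∑' j, ∫ x, f j x ∂P := integral_tsum hmeas hsum
    _ = ∑' j : ℕ, ((-Δ)^j / (Nat.factorial j : ℝ)) * ∫ x, x ^ (k+j) * Real.exp (-(s0 * x)) ∂P := by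
        apply tsum_congr
        intro j
        exact integral_const_mul _ _

lemma aux_laplace_eq (P Q : Measure ℝ) [IsProbabilityMeasure P] [IsProbabilityMeasure Q]
    (hP0 : P (Iio 0) = 0) (hQ0 : Q (Iio 0) = 0) (μ0 : ℝ) (hμ0 : 0 < μ0)
    (hPb : ∀ k : ℕ, ∫⁻ x, ENNReal.ofReal (x ^ k) ∂P
      ≤ (Nat.factorial k : ℝ≥0∞) * (ENNReal.ofReal μ0) ^ k)
    (hQb : ∀ k : ℕ, ∫⁻ x, ENNReal.ofReal (x ^ k) ∂Q
      ≤ (Nat.factorial k : ℝ≥0∞) * (ENNReal.ofReal μ0) ^ k)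
    (hmom : ∀ k : ℕ, 0 < k → ∫ x, x ^ k ∂P = ∫ x, x ^ k ∂Q) :
    ∀ s : ℝ, 0 ≤ s → ∀ k : ℕ,
      ∫ x, x ^ k * Real.exp (-(s * x)) ∂P = ∫ x, x ^ k * Real.exp (-(s * x)) ∂Q := by
  set δ : ℝ := 1/(4*μ0) with hδ
  have hδpos : 0 < δ := by positivity
  have base : ∀ k : ℕ, ∫ x, x ^ k * Real.exp (-((0:ℝ) * x)) ∂P
      = ∫ x, x ^ k * Real.exp (-((0:ℝ) * x)) ∂Q := by
    intro k
    simp only [zero_mul, neg_zero, Real.exp_zero, mul_one]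
    rcases Nat.eq_zero_or_pos k with hk | hk
    · subst hk; simp
    · exact hmom k hk
  have step : ∀ s0 : ℝ, 0 ≤ s0 → ∀ Δ : ℝ, 0 ≤ Δ → Δ ≤ δ →
      (∀ k : ℕ, ∫ x, x ^ k * Real.exp (-(s0 * x)) ∂P = ∫ x, x ^ k * Real.exp (-(s0 * x)) ∂Q) →
      (∀ k : ℕ, ∫ x, x ^ k * Real.exp (-((s0+Δ) * x)) ∂P
        = ∫ x, x ^ k * Real.exp (-((s0+Δ) * x)) ∂Q) := by
    intro s0 hs0 Δ hΔ0 hΔle hA k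
    rw [aux_expand P hP0 μ0 hμ0 hPb s0 Δ hs0 hΔ0 hΔle k,
      aux_expand Q hQ0 μ0 hμ0 hQb s0 Δ hs0 hΔ0 hΔle k]
    exact tsum_congr (fun j => by rw [hA (k+j)])
  have hgrid : ∀ n : ℕ, ∀ s : ℝ, 0 ≤ s → s ≤ n * δ →
      ∀ k : ℕ, ∫ x, x ^ k * Real.exp (-(s * x)) ∂P = ∫ x, x ^ k * Real.exp (-(s * x)) ∂Q := by
    intro n
    induction n with
    | zero =>
        intro s hs0 hsn k
        have : s = 0 := le_antisymm (by simpa using hsn) hs0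
        subst this
        exact base k
    | succ n ih =>
        intro s hs0 hsn k
        by_cases hle : s ≤ n * δ
        · exact ih s hs0 hle k
        · push_neg at hle
          have hnδ : (0:ℝ) ≤ n * δ := by positivity
          have hΔ0 : 0 ≤ s - n * δ := by linarith
          have hΔle : s - n * δ ≤ δ := by
            have : ((n:ℝ)+1) * δ = n * δ + δ := by ring
            push_cast at hsn
            linarith
          have hA : ∀ k : ℕ, ∫ x, x ^ k * Real.exp (-((n * δ) * x)) ∂P
              = ∫ x, x ^ k * Real.exp (-((n * δ) * x)) ∂Q :=
            fun k => ih (n * δ) hnδ le_rfl k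
          have := step (n * δ) hnδ (s - n * δ) hΔ0 hΔle hA k
          rwa [show n * δ + (s - n * δ) = s by ring] at this
  intro s hs k
  exact hgrid ⌈s/δ⌉₊ s hs (by
    have h1 : s/δ ≤ (⌈s/δ⌉₊ : ℝ) := Nat.le_ceil _
    calc s = (s/δ) * δ := by field_simp
      _ ≤ (⌈s/δ⌉₊ : ℝ) * δ := mul_le_mul_of_nonneg_right h1 hδpos.le) k

lemma aux_compact_moments (P' Q' : Measure ℝ) [IsProbabilityMeasure P'] [IsProbabilityMeasure Q']
    (hP'c : P' ((Icc (0:ℝ) 1)ᶜ) = 0) (hQ'c : Q' ((Icc (0:ℝ) 1)ᶜ) = 0)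
    (hmom : ∀ n : ℕ, ∫ y, y ^ n ∂P' = ∫ y, y ^ n ∂Q') :
    P' = Q' := by
  have haeP : ∀ᵐ y ∂P', y ∈ Icc (0:ℝ) 1 := by rw [ae_iff]; convert hP'c using 2; ext; simp
  have haeQ : ∀ᵐ y ∂Q', y ∈ Icc (0:ℝ) 1 := by rw [ae_iff]; convert hQ'c using 2; ext; simp
  have hintmono : ∀ (R : Measure ℝ) [IsProbabilityMeasure R], (∀ᵐ y ∂ R, y ∈ Icc (0:ℝ) 1) →
      ∀ n : ℕ, Integrable (fun y : ℝ => y ^ n) R := by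
    intro R _ hae n
    refine Integrable.mono' (integrable_const 1)
      ((continuous_pow n).aestronglyMeasurable) ?_
    filter_upwards [hae] with y hy
    rw [Real.norm_eq_abs, abs_pow]
    exact pow_le_one₀ (abs_nonneg _) (abs_le.mpr ⟨by linarith [hy.1], hy.2⟩)
  have hpoly : ∀ p : Polynomial ℝ, ∫ y, p.eval y ∂P' = ∫ y, p.eval y ∂Q' := by
    intro p
    have hev : ∀ y : ℝ, p.eval y
        = ∑ i ∈ Finset.range (p.natDegree + 1), p.coeff i * y ^ i := by
      intro y
      rw [Polynomial.eval_eq_sum_range]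
    simp only [hev]
    rw [integral_finset_sum _ (fun i _ => (hintmono P' haeP i).const_mul _),
      integral_finset_sum _ (fun i _ => (hintmono Q' haeQ i).const_mul _)]
    refine Finset.sum_congr rfl (fun i _ => ?_)
    rw [integral_const_mul, integral_const_mul, hmom i]
  have hbc : ∀ g : ℝ → ℝ, Continuous g → (∃ C : ℝ, ∀ x, |g x| ≤ C) →
      ∫ y, g y ∂P' = ∫ y, g y ∂Q' := by
    rintro g hg ⟨C, hC⟩
    have hgint : ∀ (R : Measure ℝ) [IsProbabilityMeasure R], Integrable g R := by
      intro R _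
      refine Integrable.mono' (integrable_const C) hg.aestronglyMeasurable ?_
      exact Eventually.of_forall (fun x => by rw [Real.norm_eq_abs]; exact hC x)
    have key : ∀ ε : ℝ, 0 < ε → |(∫ y, g y ∂P') - ∫ y, g y ∂Q'| ≤ 2 * ε := by
      intro ε hε
      obtain ⟨p, hp⟩ := exists_polynomial_near_of_continuousOn 0 1 g hg.continuousOn ε hε
      obtain ⟨M, hM⟩ := (isCompact_Icc (a := (0:ℝ)) (b := 1)).exists_bound_of_continuousOn
        p.continuous_aeval.continuousOn
    -- integrability of p.eval
      have hpint : ∀ (R : Measure ℝ) [IsProbabilityMeasure R], (∀ᵐ y ∂ R, y ∈ Icc (0:ℝ) 1) →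
          Integrable (fun y => p.eval y) R := by
        intro R _ hae
        refine Integrable.mono' (integrable_const M) p.continuous_aeval.aestronglyMeasurable ?_
        filter_upwards [hae] with y hy
        exact hM y hy
      have hd : ∀ (R : Measure ℝ) [IsProbabilityMeasure R], (∀ᵐ y ∂ R, y ∈ Icc (0:ℝ) 1) →
          |(∫ y, g y ∂ R) - ∫ y, p.eval y ∂ R| ≤ ε := by
        intro R _ hae
        rw [← integral_sub (hgint R) (hpint R hae)]
        have hb := norm_integral_le_of_norm_le_const (μ := R) (C := ε)
          (f := fun y => g y - p.eval y) ?_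
        · rw [← Real.norm_eq_abs]
          calc ‖∫ y, (g y - p.eval y) ∂ R‖ ≤ ε * (R univ).toReal := hb
            _ = ε := by simp
        · filter_upwards [hae] with y hy
          rw [Real.norm_eq_abs, abs_sub_comm]
          exact (hp y hy).le
      calc |(∫ y, g y ∂P') - ∫ y, g y ∂Q'|
          ≤ |(∫ y, g y ∂P') - ∫ y, p.eval y ∂P'|
            + |(∫ y, p.eval y ∂Q') - ∫ y, g y ∂Q'| := by
            have := hpoly p
            rw [show (∫ y, g y ∂P') - ∫ y, g y ∂Q'
              = ((∫ y, g y ∂P') - ∫ y, p.eval y ∂P')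
                + ((∫ y, p.eval y ∂Q') - ∫ y, g y ∂Q') by rw [← this]; ring]
            exact abs_add_le _ _
        _ ≤ ε + ε := add_le_add (hd P' haeP) (by rw [abs_sub_comm]; exact hd Q' haeQ)
        _ = 2 * ε := by ring
    by_contra hne
    have habs : 0 < |(∫ y, g y ∂P') - ∫ y, g y ∂Q'| := abs_pos.mpr (sub_ne_zero.mpr hne)
    have h4 := key (|(∫ y, g y ∂P') - ∫ y, g y ∂Q'| / 4) (by positivity)
    linarith
  apply ext_of_forall_lintegral_eq_of_IsFiniteMeasure
  intro f
  have hgc : Continuous (fun x : ℝ => (f x : ℝ)) := NNReal.continuous_coe.comp f.continuous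
  set C : ℝ := ((nndist (0 : BoundedContinuousFunction ℝ ℝ≥0) f : ℝ≥0) : ℝ) with hC
  have hgb : ∀ x : ℝ, |(f x : ℝ)| ≤ C := by
    intro x
    rw [abs_of_nonneg (f x).coe_nonneg, hC]
    exact_mod_cast f.apply_le_nndist_zero x
  rw [lintegral_coe_eq_integral f (f.integrable_of_nnreal P'),
    lintegral_coe_eq_integral f (f.integrable_of_nnreal Q')]
  have := hbc (fun x : ℝ => (f x : ℝ)) hgc ⟨C, hgb⟩
  rw [this]


/-- An NBUE life distribution is uniquely determined by its moment sequence: if `P` and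
`Q` are both NBUE with the same moments of all positive integer orders, then `P = Q`. -/
theorem nbue_determined_by_moments
    (P Q : Measure ℝ) [IsProbabilityMeasure P] [IsProbabilityMeasure Q]
    (hP0 : P (Iio 0) = 0) (hQ0 : Q (Iio 0) = 0)
    (hPint : Integrable id P) (hQint : Integrable id Q)
    (μP μQ : ℝ) (hμP : μP = ∫ x, x ∂P) (hμQ : μQ = ∫ x, x ∂Q)
    (hμPpos : 0 < μP) (hμQpos : 0 < μQ)
    (hPNBUE : ∀ t ≥ (0:ℝ), ∫ x in Ioi t, (P (Ioi x)).toReal ≤ μP * (P (Ioi t)).toReal)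
    (hQNBUE : ∀ t ≥ (0:ℝ), ∫ x in Ioi t, (Q (Ioi x)).toReal ≤ μQ * (Q (Ioi t)).toReal)
    (hmom : ∀ k : ℕ, 0 < k → ∫ x, x ^ k ∂P = ∫ x, x ^ k ∂Q) :
    P = Q := by
  set μ0 : ℝ := max μP μQ with hμ0def
  have hμ0 : 0 < μ0 := lt_max_of_lt_left hμPpos
  have hmono : ∀ (R : Measure ℝ) (μR : ℝ), 0 < μR → μR ≤ μ0 →
      (∀ k : ℕ, ∫⁻ x, ENNReal.ofReal (x ^ k) ∂ R
        ≤ (Nat.factorial k : ℝ≥0∞) * (ENNReal.ofReal μR) ^ k) →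
      (∀ k : ℕ, ∫⁻ x, ENNReal.ofReal (x ^ k) ∂ R
        ≤ (Nat.factorial k : ℝ≥0∞) * (ENNReal.ofReal μ0) ^ k) := by
    intro R μR _ hle hb k
    refine (hb k).trans (mul_le_mul_right (pow_le_pow_left' (ENNReal.ofReal_le_ofReal hle) k) _)
  have hPb := hmono P μP hμPpos (le_max_left _ _)
    (aux_moment_bound P hP0 hPint μP hμP hμPpos.le hPNBUE)
  have hQb := hmono Q μQ hμQpos (le_max_right _ _)
    (aux_moment_bound Q hQ0 hQint μQ hμQ hμQpos.le hQNBUE)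
  have hlap := aux_laplace_eq P Q hP0 hQ0 μ0 hμ0 hPb hQb hmom
  -- push forward under x ↦ exp (-x)
  set e : ℝ → ℝ := fun x => Real.exp (-x) with he
  have hec : Continuous e := Real.continuous_exp.comp continuous_neg
  have hem : Measurable e := hec.measurable
  have hinj : Function.Injective e := fun a b hab => by
    have := Real.exp_injective hab
    linarith [this]
  haveI hP' : IsProbabilityMeasure (P.map e) := Measure.isProbabilityMeasure_map hem.aemeasurable
  haveI hQ' : IsProbabilityMeasure (Q.map e) := Measure.isProbabilityMeasure_map hem.aemeasurable
  have hmome : ∀ (R : Measure ℝ) [IsProbabilityMeasure R], ∀ n : ℕ,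
      ∫ y, y ^ n ∂(R.map e) = ∫ x, x ^ 0 * Real.exp (-((n:ℝ) * x)) ∂ R := by
    intro R _ n
    rw [integral_map hem.aemeasurable ((continuous_pow n).aestronglyMeasurable)]
    apply integral_congr_ae
    apply Eventually.of_forall
    intro x
    simp only [he, pow_zero, one_mul]
    rw [← Real.exp_nat_mul]
    congr 1
    ring
  have hconc : ∀ (R : Measure ℝ), R (Iio 0) = 0 → Measurable e →
      (R.map e) ((Icc (0:ℝ) 1)ᶜ) = 0 := by
    intro R hR0 hm
    rw [Measure.map_apply hm measurableSet_Icc.compl]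
    apply measure_mono_null _ hR0
    intro x hx
    simp only [mem_preimage, mem_compl_iff, mem_Icc, not_and_or, not_le] at hx
    by_contra hcon
    simp only [mem_Iio, not_lt] at hcon
    rcases hx with h | h
    · exact absurd (Real.exp_pos _).le (not_le.mpr h)
    · have : Real.exp (-x) ≤ 1 := Real.exp_le_one_iff.mpr (by linarith)
      simp only [he] at h
      linarith
  have hPQ' : P.map e = Q.map e := by
    apply aux_compact_moments (P.map e) (Q.map e) (hconc P hP0 hem) (hconc Q hQ0 hem)
    intro n
    rw [hmome P n, hmome Q n]
    exact hlap (n : ℝ) (Nat.cast_nonneg n) 0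
  have hemb : MeasurableEmbedding e := hec.measurableEmbedding hinj
  ext s hs
  have h1 : P s = (P.map e) (e '' s) := by
    rw [hemb.map_apply, hinj.preimage_image]
  have h2 : Q s = (Q.map e) (e '' s) := by
    rw [hemb.map_apply, hinj.preimage_image]
  rw [h1, h2, hPQ']
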